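/- Let R, R⋆ ∈ ℝ^{3×3} with RᵀR = I, R⋆ᵀR⋆ = I, det R = det R⋆ = 1 (i.e., R, R⋆ ∈ SO(3)), and let X ∈ ℝ^{3×3} be skew-symmetric (Xᵀ = −X). Then the second derivative at s = 0 of the map s ↦ ½ ‖R·exp(sX) − R⋆‖²_F equals tr(Xᵀ X R⋆ᵀ R) = −tr(R⋆ᵀ R X²). In particular, at R = R⋆ this second derivative equals tr(XᵀX) = ‖X‖²_F, which is strictly positive for X ≠ 0. -/

import Mathlib

open scoped Matrix
open NormedSpace

/-- Hessian of `F(R) = ½‖R - R⋆‖²_F` on `SO(3)` along geodesics: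
for `R, R⋆ ∈ SO(3)` and skew-symmetric `X`, the second derivative at `s = 0` of
`s ↦ ½‖R exp(sX) - R⋆‖²_F` equals `tr(Xᵀ X R⋆ᵀ R) = -tr(R⋆ᵀ R X²)`; at `R = R⋆` it
equals `tr(Xᵀ X) = ‖X‖²_F > 0` for `X ≠ 0`. -/
private lemma aux_deriv_tr (M X : Matrix (Fin 3) (Fin 3) ℝ) (t : ℝ) :
    HasDerivAt (fun s : ℝ => Matrix.trace (M * exp (s • X)))
      (Matrix.trace (M * (exp (t • X) * X))) t := by
  letI : SeminormedRing (Matrix (Fin 3) (Fin 3) ℝ) := Matrix.linftyOpSemiNormedRing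
  letI : NormedRing (Matrix (Fin 3) (Fin 3) ℝ) := Matrix.linftyOpNormedRing
  letI : NormedAlgebra ℝ (Matrix (Fin 3) (Fin 3) ℝ) := Matrix.linftyOpNormedAlgebra
  have h : HasDerivAt (fun s : ℝ => M * exp (s • X)) (M * (exp (t • X) * X)) t :=
    (hasDerivAt_exp_smul_const X t).const_mul M
  exact
    ((Matrix.traceLinearMap (Fin 3) ℝ ℝ).toContinuousLinearMap.hasFDerivAt).comp_hasDerivAt t h

private lemma aux_deriv_tr2 (M X : Matrix (Fin 3) (Fin 3) ℝ) (t : ℝ) :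
    HasDerivAt (fun s : ℝ => Matrix.trace (M * (exp (s • X) * X)))
      (Matrix.trace (M * (exp (t • X) * X * X))) t := by
  letI : SeminormedRing (Matrix (Fin 3) (Fin 3) ℝ) := Matrix.linftyOpSemiNormedRing
  letI : NormedRing (Matrix (Fin 3) (Fin 3) ℝ) := Matrix.linftyOpNormedRing
  letI : NormedAlgebra ℝ (Matrix (Fin 3) (Fin 3) ℝ) := Matrix.linftyOpNormedAlgebra
  have h : HasDerivAt (fun s : ℝ => M * (exp (s • X) * X)) (M * (exp (t • X) * X * X)) t :=
    (((hasDerivAt_exp_smul_const X t).mul_const X).const_mul M).congr_deriv (by noncomm_ring)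
  exact
    ((Matrix.traceLinearMap (Fin 3) ℝ ℝ).toContinuousLinearMap.hasFDerivAt).comp_hasDerivAt t h

private lemma aux_cost_eq (R Rstar X : Matrix (Fin 3) (Fin 3) ℝ)
    (hR : Rᵀ * R = 1) (hRstar : Rstarᵀ * Rstar = 1) (hX : Xᵀ = -X) (s : ℝ) :
    (1 / 2 : ℝ) * Matrix.trace
        ((R * exp (s • X) - Rstar)ᵀ * (R * exp (s • X) - Rstar))
      = 3 - Matrix.trace (Rstarᵀ * R * exp (s • X)) := by
  set E := exp (s • X) with hE
  have hEt : Eᵀ = exp (-(s • X)) := by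
    rw [hE, ← Matrix.exp_transpose]
    congr 1
    rw [Matrix.transpose_smul, hX, smul_neg]
  have hEE : Eᵀ * E = 1 := by
    rw [hEt, hE, ← Matrix.exp_add_of_commute _ _ ((Commute.refl (s • X)).neg_left),
      neg_add_cancel, exp_zero]
  have hexpand : (R * E - Rstar)ᵀ * (R * E - Rstar)
      = Eᵀ * (Rᵀ * R) * E - Eᵀ * Rᵀ * Rstar - Rstarᵀ * (R * E) + Rstarᵀ * Rstar := by
    simp only [Matrix.transpose_sub, Matrix.transpose_mul, Matrix.sub_mul, Matrix.mul_sub]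
    noncomm_ring
  have h1 : Matrix.trace (Eᵀ * (Rᵀ * R) * E) = 3 := by
    rw [hR, Matrix.mul_one, hEE]
    simp
  have h2 : Matrix.trace (Eᵀ * Rᵀ * Rstar) = Matrix.trace (Rstarᵀ * R * E) := by
    have : Eᵀ * Rᵀ * Rstar = (Rstarᵀ * (R * E))ᵀ := by
      simp [Matrix.transpose_mul, Matrix.mul_assoc]
    rw [this, Matrix.trace_transpose, Matrix.mul_assoc]
  have h3 : Matrix.trace (Rstarᵀ * Rstar) = 3 := by rw [hRstar]; simp
  rw [hexpand, Matrix.trace_add, Matrix.trace_sub, Matrix.trace_sub, h1, h2, h3,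
    Matrix.mul_assoc]
  ring

set_option linter.unusedVariables false in
theorem so3_hessian_of_frobenius_cost
    (R Rstar X : Matrix (Fin 3) (Fin 3) ℝ)
    (hR : Rᵀ * R = 1) (hRstar : Rstarᵀ * Rstar = 1)
    (hdetR : R.det = 1) (hdetRstar : Rstar.det = 1)
    (hX : Xᵀ = -X) :
    iteratedDeriv 2
      (fun s : ℝ =>
        (1 / 2 : ℝ) * Matrix.trace
          ((R * NormedSpace.exp (s • X) - Rstar)ᵀ *
            (R * NormedSpace.exp (s • X) - Rstar))) 0
      = Matrix.trace (Xᵀ * X * (Rstarᵀ * R))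
    ∧
    Matrix.trace (Xᵀ * X * (Rstarᵀ * R)) = -Matrix.trace (Rstarᵀ * R * (X * X))
    ∧
    (R = Rstar →
      Matrix.trace (Xᵀ * X * (Rstarᵀ * R)) = Matrix.trace (Xᵀ * X) ∧
      (X ≠ 0 → 0 < Matrix.trace (Xᵀ * X))) := by
  set M := Rstarᵀ * R with hM
  have key2 : Matrix.trace (Xᵀ * X * M) = -Matrix.trace (M * (X * X)) := by
    rw [hX]
    simp only [Matrix.neg_mul, Matrix.trace_neg, neg_inj]
    exact Matrix.trace_mul_comm (X * X) M
  refine ⟨?_, key2, ?_⟩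
  · -- the second derivative computation
    have hfun : (fun s : ℝ =>
        (1 / 2 : ℝ) * Matrix.trace
          ((R * NormedSpace.exp (s • X) - Rstar)ᵀ *
            (R * NormedSpace.exp (s • X) - Rstar)))
        = fun s : ℝ => 3 - Matrix.trace (M * exp (s • X)) :=
      funext fun s => aux_cost_eq R Rstar X hR hRstar hX s
    rw [hfun, iteratedDeriv_succ, iteratedDeriv_one]
    have hd1 : (deriv fun s : ℝ => 3 - Matrix.trace (M * exp (s • X)))
        = fun t : ℝ => -Matrix.trace (M * (exp (t • X) * X)) := by
      funext t
      exact (((hasDerivAt_const t (3:ℝ)).sub (aux_deriv_tr M X t)).congr_deriv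
        (by ring)).deriv
    rw [hd1]
    have hd2 : HasDerivAt (fun t : ℝ => -Matrix.trace (M * (exp (t • X) * X)))
        (-Matrix.trace (M * (exp ((0:ℝ) • X) * X * X))) 0 := (aux_deriv_tr2 M X 0).neg
    rw [hd2.deriv]
    rw [zero_smul, exp_zero, Matrix.one_mul, key2, Matrix.mul_assoc]
  · rintro rfl
    have hM1 : M = 1 := hRstar
    constructor
    · rw [hM1, Matrix.mul_one]
    · intro hXne
      have htr : Matrix.trace (Xᵀ * X) = ∑ i : Fin 3, ∑ j : Fin 3, (X j i) ^ 2 := by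
        simp [Matrix.trace, Matrix.mul_apply, Matrix.diag, sq]
      obtain ⟨i, j, hij⟩ : ∃ i j, X i j ≠ 0 := by
        by_contra h
        push_neg at h
        exact hXne (Matrix.ext fun i j => h i j)
      rw [htr]
      refine Finset.sum_pos' (fun k _ => Finset.sum_nonneg fun l _ => sq_nonneg _)
        ⟨j, Finset.mem_univ j, Finset.sum_pos' (fun l _ => sq_nonneg _)
          ⟨i, Finset.mem_univ i, by positivity⟩⟩
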